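/- For 1 ≤ p ≤ n, the number of unlabeled plane trees on n+1 vertices having exactly p leaves equals (1/(n+1)) · C(n+1, p) · C(n−1, n−p) (the Narayana number). -/

import Mathlib

/-- A (finite, unlabeled) plane tree: a root together with a linearly ordered
list of subtrees. -/
inductive PlaneTree : Type
  | node : List PlaneTree → PlaneTree

/-- The number of vertices of a plane tree. -/
def PlaneTree.size : PlaneTree → ℕ
  | .node ts => 1 + (ts.attach.map fun t => PlaneTree.size t.1).sum
decreasing_by have := List.sizeOf_lt_of_mem t.2; simp at this ⊢; omega

/-- The number of leaves (vertices with no children) of a plane tree. -/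
def PlaneTree.leaves : PlaneTree → ℕ
  | .node [] => 1
  | .node (t :: ts) => (((t :: ts).attach).map fun s => PlaneTree.leaves s.1).sum
decreasing_by have := List.sizeOf_lt_of_mem s.2; simp at this ⊢; omega


namespace NarayanaProof
open List

def encF : List PlaneTree → List ℕ
  | [] => []
  | (PlaneTree.node cs) :: ts => (cs.length :: encF cs) ++ encF ts

theorem size_node (ts : List PlaneTree) :
    (PlaneTree.node ts).size = 1 + (ts.map PlaneTree.size).sum := by
  rw [PlaneTree.size]
  rw [List.attach_map_val (l := ts) (f := PlaneTree.size)]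

theorem leaves_node_nil : (PlaneTree.node []).leaves = 1 := by
  rw [PlaneTree.leaves]

theorem leaves_node_cons (t : PlaneTree) (ts : List PlaneTree) :
    (PlaneTree.node (t :: ts)).leaves = ((t :: ts).map PlaneTree.leaves).sum := by
  rw [PlaneTree.leaves]
  rw [List.attach_map_val (l := t :: ts) (f := PlaneTree.leaves)]

theorem encF_append (a b : List PlaneTree) : encF (a ++ b) = encF a ++ encF b := by
  induction a with
  | nil => simp [encF]
  | cons t ts ih =>
    obtain ⟨cs⟩ := t
    simp [encF, ih]

theorem length_encF (ts : List PlaneTree) :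
    (encF ts).length = (ts.map PlaneTree.size).sum := by
  induction ts using encF.induct with
  | case1 => simp [encF]
  | case2 cs ts ih1 ih2 =>
    simp [encF, ih1, ih2, size_node]
    omega

theorem count0_encF (ts : List PlaneTree) :
    (encF ts).count 0 = (ts.map PlaneTree.leaves).sum := by
  induction ts using encF.induct with
  | case1 => simp [encF]
  | case2 cs ts ih1 ih2 =>
    cases cs with
    | nil => simp [encF, ih2, leaves_node_nil]; omega
    | cons c cs' =>
      rw [encF]
      simp only [List.cons_append, List.count_cons, List.count_append, ih1, ih2,
        List.map_cons, List.sum_cons, leaves_node_cons]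
      simp


def Good (k : ℕ) (l : List ℕ) : Prop :=
  l.sum + k = l.length ∧ ∀ j < l.length, j < (l.take j).sum + k

theorem Good.append {k k' : ℕ} {l l' : List ℕ} (h : Good k l) (h' : Good k' l') :
    Good (k + k') (l ++ l') := by
  obtain ⟨hs, hp⟩ := h
  obtain ⟨hs', hp'⟩ := h'
  constructor
  · simp; omega
  · intro j hj
    rcases lt_or_ge j l.length with hlt | hge
    · rw [List.take_append_of_le_length hlt.le]
      have := hp j hlt
      omega
    · have hj' : j - l.length < l'.length := by simp at hj; omega
      have : (l ++ l').take j = l ++ l'.take (j - l.length) := by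
        rw [List.take_append]
        congr 1
        rw [List.take_of_length_le (by omega)]
      rw [this]
      simp only [List.sum_append]
      rcases Nat.eq_or_lt_of_le hge with heq | hlt2
      · have h0 := hp' 0 (by omega)
        simp at h0
        omega
      · have := hp' (j - l.length) hj'
        omega

theorem Good.cons {c : ℕ} {m : List ℕ} (h : Good c m) : Good 1 (c :: m) := by
  obtain ⟨hs, hp⟩ := h
  constructor
  · simp; omega
  · intro j hj
    cases j with
    | zero => simp
    | succ j' =>
      simp only [List.take_succ_cons, List.sum_cons]
      have := hp j' (by simpa using hj)
      omega

theorem good_encF (ts : List PlaneTree) : Good ts.length (encF ts) := by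
  induction ts using encF.induct with
  | case1 => exact ⟨by simp [encF], by simp [encF]⟩
  | case2 cs ts ih1 ih2 =>
    have h1 : Good 1 (cs.length :: encF cs) := ih1.cons
    have := h1.append ih2
    rw [encF]
    simpa [Nat.add_comm] using this

theorem good_exists_aux : ∀ (N : ℕ) (l : List ℕ), l.length ≤ N → ∀ (k : ℕ), Good k l →
    ∃ ts : List PlaneTree, ts.length = k ∧ encF ts = l := by
  intro N
  induction N with
  | zero =>
    intro l hl k hg
    have : l = [] := List.eq_nil_of_length_eq_zero (by omega)
    subst this
    obtain ⟨hs, -⟩ := hg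
    exact ⟨[], by simpa using hs.symm, by simp [encF]⟩
  | succ N IH =>
    intro l hl k hg
    obtain ⟨hs, hp⟩ := hg
    cases l with
    | nil => exact ⟨[], by simpa using hs.symm, by simp [encF]⟩
    | cons c t =>
      have hk : 1 ≤ k := by have := hp 0 (by simp); simp at this; omega
      have hgt : Good (k - 1 + c) t := by
        constructor
        · simp at hs; omega
        · intro j hj
          have := hp (j + 1) (by simp; omega)
          simp only [List.take_succ_cons, List.sum_cons] at this
          omega
      obtain ⟨ts', hlen', henc'⟩ := IH t (by simp at hl; omega) _ hgt
      refine ⟨PlaneTree.node (ts'.take c) :: ts'.drop c, ?_, ?_⟩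
      · simp; omega
      · rw [encF, List.cons_append]
        rw [show (encF (ts'.take c) ++ encF (ts'.drop c)) = encF (ts'.take c ++ ts'.drop c) from (encF_append _ _).symm]
        rw [List.take_append_drop, henc', List.length_take, hlen']
        congr 2
        omega

theorem good_exists (l : List ℕ) (k : ℕ) (h : Good k l) :
    ∃ ts : List PlaneTree, ts.length = k ∧ encF ts = l :=
  good_exists_aux l.length l le_rfl k h

def step (c : ℕ) (s : List PlaneTree) : List PlaneTree :=
  PlaneTree.node (s.take c) :: s.drop c

theorem foldr_step_encF (ts : List PlaneTree) :
    ∀ s : List PlaneTree, (encF ts).foldr step s = ts ++ s := by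
  induction ts using encF.induct with
  | case1 => intro s; simp [encF]
  | case2 cs ts ih1 ih2 =>
    intro s
    rw [encF, List.cons_append, List.foldr_cons, List.foldr_append, ih2, ih1]
    simp [step]

theorem encF_injective : Function.Injective encF := by
  intro a b h
  have := foldr_step_encF a []
  rw [h, foldr_step_encF b] at this
  simpa using this.symm

theorem card_trees_eq_card_lists (n p : ℕ) :
    Nat.card {t : PlaneTree // t.size = n + 1 ∧ t.leaves = p} =
      Nat.card {l : List ℕ // Good 1 l ∧ l.length = n + 1 ∧ l.count 0 = p} := by
  have hlen : ∀ t : PlaneTree, (encF [t]).length = t.size := by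
    intro t; simpa using length_encF [t]
  have hcnt : ∀ t : PlaneTree, (encF [t]).count 0 = t.leaves := by
    intro t; simpa using count0_encF [t]
  apply Nat.card_congr
  refine Equiv.ofBijective
    (fun x => ⟨encF [x.1], by simpa using good_encF [x.1], by rw [hlen, x.2.1],
      by rw [hcnt, x.2.2]⟩) ⟨?_, ?_⟩
  · rintro ⟨a, _⟩ ⟨b, _⟩ h
    simp only [Subtype.mk.injEq] at h ⊢
    have := encF_injective h
    simpa using this
  · rintro ⟨l, hg, hl, hc⟩
    obtain ⟨ts, hl1, he⟩ := good_exists l 1 hg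
    obtain ⟨t, rfl⟩ : ∃ t, ts = [t] := by
      cases ts with
      | nil => simp at hl1
      | cons t ts' =>
        cases ts' with
        | nil => exact ⟨t, rfl⟩
        | cons a b => simp at hl1
    exact ⟨⟨t, by rw [← hlen, he, hl], by rw [← hcnt, he, hc]⟩, by simp [he]⟩



/-- The (shifted) partial-sum walk of `l ++ l`. -/
def g (l : List ℕ) (m : ℕ) : ℤ := ((((l ++ l).take m).sum : ℕ) : ℤ) - m

variable {n : ℕ} {l : List ℕ}

theorem rotate_take (hl : l.length = n + 1) {i j : ℕ} (hi : i ≤ n) (hj : j ≤ n + 1) :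
    (l.rotate i).take j = ((l ++ l).drop i).take j := by
  have h1 : l.rotate i = ((l ++ l).drop i).take (n + 1) := by
    have e1 : (l ++ l).drop i = l.drop i ++ l :=
      drop_append_of_le_length (by omega)
    have e2 : (l.drop i ++ l).take (n + 1) =
        (l.drop i).take (n + 1) ++ l.take (n + 1 - (l.drop i).length) :=
      take_append
    have e3 : (l.drop i).take (n + 1) = l.drop i :=
      take_of_length_le (by rw [length_drop, hl]; omega)
    rw [rotate_eq_drop_append_take (by omega), e1, e2, e3, length_drop, hl]
    congr 2
    omega
  rw [h1, take_take, min_eq_left hj]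

theorem sum_take_rotate (hl : l.length = n + 1) {i j : ℕ} (hi : i ≤ n) (hj : j ≤ n + 1) :
    (((l ++ l).take i).sum + ((l.rotate i).take j).sum = ((l ++ l).take (i + j)).sum) := by
  rw [rotate_take hl hi hj, ← sum_append, ← take_add]

theorem g_period (hl : l.length = n + 1) (hs : l.sum = n) {m : ℕ} (hm : m ≤ n + 1) :
    g l (m + (n + 1)) = g l m - 1 := by
  unfold g
  have h1 : (l ++ l).take (m + (n + 1)) = l ++ l.take m := by
    rw [add_comm m, ← hl, take_length_add_append]
  have h2 : (l ++ l).take m = l.take m := take_append_of_le_length (by omega)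
  rw [h1, h2, sum_append, hs]
  push_cast
  ring

theorem good_rotate_iff (hl : l.length = n + 1) (hs : l.sum = n) {i : ℕ} (hi : i ≤ n) :
    Good 1 (l.rotate i) ↔ ∀ j ≤ n, g l i ≤ g l (i + j) := by
  have hsum : (l.rotate i).sum = n := by rw [(rotate_perm l i).sum_eq, hs]
  have hlen : (l.rotate i).length = n + 1 := by rw [length_rotate, hl]
  constructor
  · rintro ⟨-, hp⟩ j hj
    have := hp j (by omega)
    have hst := sum_take_rotate hl hi (j := j) (by omega)
    unfold g
    omega
  · intro h
    refine ⟨by omega, ?_⟩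
    intro j hj
    have := h j (by omega)
    have hst := sum_take_rotate hl hi (j := j) (by omega)
    unfold g at this
    omega

/-- characterization: `rotate i` is Good iff `i` is the first minimum of `g` on `[0,n]`. -/
theorem good_rotate_iff_min (hl : l.length = n + 1) (hs : l.sum = n) {i : ℕ} (hi : i ≤ n) :
    Good 1 (l.rotate i) ↔ (∀ m ≤ n, g l i ≤ g l m) ∧ (∀ m < i, g l i < g l m) := by
  rw [good_rotate_iff hl hs hi]
  constructor
  · intro h
    constructor
    · intro m hm
      rcases le_or_gt i m with him | him
      · simpa [Nat.add_sub_cancel' him] using h (m - i) (by omega)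
      · have := h (m + (n + 1) - i) (by omega)
        rw [show i + (m + (n + 1) - i) = m + (n + 1) by omega,
          g_period hl hs (by omega)] at this
        omega
    · intro m hm
      have := h (m + (n + 1) - i) (by omega)
      rw [show i + (m + (n + 1) - i) = m + (n + 1) by omega,
        g_period hl hs (by omega)] at this
      omega
  · rintro ⟨h1, h2⟩ j hj
    rcases le_or_gt (i + j) n with hij | hij
    · exact h1 _ hij
    · have hm : i + j - (n + 1) < i := by omega
      have := h2 _ hm
      have hper := g_period hl hs (m := i + j - (n + 1)) (by omega)
      rw [show i + j - (n + 1) + (n + 1) = i + j by omega] at hper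
      omega

theorem exists_unique_rotate (hl : l.length = n + 1) (hs : l.sum = n) :
    ∃! i : ℕ, i ≤ n ∧ Good 1 (l.rotate i) := by
  have hne : (Finset.range (n + 1)).Nonempty := ⟨0, by simp⟩
  obtain ⟨m₀, hm₀, hmin⟩ := Finset.exists_min_image (Finset.range (n + 1)) (g l) hne
  simp only [Finset.mem_range] at hm₀ hmin
  have hP : ∃ i, i ≤ n ∧ ∀ m ≤ n, g l i ≤ g l m := ⟨m₀, by omega, fun m hm => hmin m (by omega)⟩
  classical
  set i := Nat.find hP with hidef
  obtain ⟨hile, himin⟩ := Nat.find_spec hP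
  have hgood : Good 1 (l.rotate i) := by
    rw [good_rotate_iff_min hl hs hile]
    refine ⟨himin, fun m hm => ?_⟩
    have hnot := Nat.find_min hP hm
    push_neg at hnot
    rcases lt_or_eq_of_le (himin m (by omega)) with h | h
    · exact h
    · exfalso
      obtain ⟨m', hm', hcon⟩ := hnot (by omega)
      exact absurd (h ▸ himin m' hm') (not_le.mpr hcon)
  refine ⟨i, ⟨hile, hgood⟩, ?_⟩
  rintro j ⟨hjle, hjgood⟩
  by_contra hne'
  rw [good_rotate_iff_min hl hs hjle] at hjgood
  have h1 := hjgood.1 i hile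
  rcases lt_or_gt_of_ne hne' with h | h
  · have hA := (good_rotate_iff_min hl hs hile).mp hgood |>.2 j h
    have hB := hjgood.1 i hile
    simp only [hidef] at hA hB ⊢
    omega
  · have hA := hjgood.2 i h
    have hB := (good_rotate_iff_min hl hs hile).mp hgood |>.1 j hjle
    simp only [hidef] at hA hB ⊢
    omega

theorem card_rotate (n p : ℕ) :
    Nat.card {l : List ℕ // l.length = n + 1 ∧ l.sum = n ∧ l.count 0 = p} =
      (n + 1) * Nat.card {l : List ℕ // Good 1 l ∧ l.length = n + 1 ∧ l.count 0 = p} := by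
  have key : Nat.card {l : List ℕ // l.length = n + 1 ∧ l.sum = n ∧ l.count 0 = p} =
      Nat.card ({l : List ℕ // Good 1 l ∧ l.length = n + 1 ∧ l.count 0 = p} × Fin (n + 1)) := by
    apply Nat.card_congr
    symm
    refine Equiv.ofBijective (fun x =>
      ⟨x.1.1.rotate x.2.1, ?_, ?_, ?_⟩) ⟨?_, ?_⟩
    · rw [List.length_rotate]; exact x.1.2.2.1
    · rw [(List.rotate_perm _ _).sum_eq]
      have := x.1.2.1.1
      have := x.1.2.2.1
      omega
    · rw [(List.rotate_perm _ _).count_eq]; exact x.1.2.2.2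
    · rintro ⟨⟨a, hga, hla, hca⟩, ⟨i, hi⟩⟩ ⟨⟨b, hgb, hlb, hcb⟩, ⟨i', hi'⟩⟩ heq
      simp only [Subtype.mk.injEq, Prod.mk.injEq] at heq ⊢
      have hrot : b = a.rotate (i + (n + 1) - i') := by
        have h1 : (b.rotate i').rotate (n + 1 - i') = b := by
          rw [List.rotate_rotate, show i' + (n + 1 - i') = n + 1 by omega, ← hlb,
            List.rotate_length]
        rw [← h1, ← heq, List.rotate_rotate]
        congr 1
        omega
      have hd : b = a.rotate ((i + (n + 1) - i') % (n + 1)) := by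
        rw [hrot]
        conv_lhs => rw [← List.rotate_mod]
        rw [hla]
      obtain ⟨u, hu, huniq⟩ := exists_unique_rotate hla (by have := hga.1; omega : a.sum = n)
      have e0 : (0 : ℕ) = u := huniq 0 ⟨by omega, by simpa using hga⟩
      have ed : (i + (n + 1) - i') % (n + 1) = u :=
        huniq _ ⟨Nat.lt_succ_iff.mp (Nat.mod_lt _ (Nat.succ_pos n)), by rw [← hd]; exact hgb⟩
      have hmod0 : (i + (n + 1) - i') % (n + 1) = 0 := by omega
      have hdvd : (n + 1) ∣ (i + (n + 1) - i') := Nat.dvd_of_mod_eq_zero hmod0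
      have hab : b = a := by rw [hd, hmod0, List.rotate_zero]
      have hii : i = i' := by
        rcases hdvd with ⟨c, hc⟩
        rcases c with _ | _ | c
        · omega
        · omega
        · have h2 : (n + 1) * 2 ≤ (n + 1) * (c + 1 + 1) :=
            Nat.mul_le_mul_left _ (by omega)
          omega
      exact ⟨hab.symm, Fin.ext hii⟩
    · rintro ⟨l, hll, hls, hlc⟩
      obtain ⟨i, ⟨hi, hgood⟩, -⟩ := exists_unique_rotate hll hls
      refine ⟨⟨⟨l.rotate i, hgood, by rw [List.length_rotate]; exact hll,
        by rw [(List.rotate_perm _ _).count_eq]; exact hlc⟩,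
        ⟨(n + 1 - i) % (n + 1), Nat.mod_lt _ (by omega)⟩⟩, ?_⟩
      simp only [Subtype.mk.injEq]
      rw [List.rotate_rotate]
      rcases Nat.eq_zero_or_pos i with rfl | hipos
      · simp
      · rw [Nat.mod_eq_of_lt (by omega), show i + (n + 1 - i) = n + 1 by omega, ← hll,
          List.rotate_length]
  rw [key, Nat.card_prod, Nat.card_eq_fintype_card (α := Fin (n + 1)), Fintype.card_fin,
    Nat.mul_comm]


theorem count_true_ofFn {m : ℕ} (f : Fin m → Bool) :
    (List.ofFn f).count true = (Finset.univ.filter fun i => f i = true).card := by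
  rw [List.ofFn_eq_map, Fin.univ_def]
  simp [Finset.card, Finset.filter, List.count, List.countP_map,
    Function.comp, List.countP_eq_length_filter, List.filter_map]
  rfl

theorem card_bool_lists (m p : ℕ) :
    Nat.card {b : List Bool // b.length = m ∧ b.count true = p} = m.choose p := by
  have e : {b : List Bool // b.length = m ∧ b.count true = p} ≃
      {s : Finset (Fin m) // s.card = p} := by
    refine ⟨fun x => ⟨Finset.univ.filter (fun i => x.1.get (Fin.cast x.2.1.symm i) = true), ?_⟩,
      fun s => ⟨List.ofFn (fun i : Fin m => decide (i ∈ s.1)), by simp, ?_⟩, ?_, ?_⟩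
    · rw [← count_true_ofFn]
      have hofn : List.ofFn (fun i => x.1.get (Fin.cast x.2.1.symm i)) = x.1 := by
        apply List.ext_get
        · simp [x.2.1]
        · intro i h1 h2
          simp
      rw [hofn]; exact x.2.2
    · rw [count_true_ofFn]
      simpa using s.2
    · rintro ⟨b, hl, hc⟩
      apply Subtype.ext
      apply List.ext_get
      · simp [hl]
      · intro i h1 h2
        simp
    · rintro ⟨s, hs⟩
      apply Subtype.ext
      ext i
      simp
  rw [Nat.card_congr e, Nat.card_eq_fintype_card, Fintype.card_finset_len, Fintype.card_fin]

theorem card_sum_fn (k s : ℕ) :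
    Nat.card {f : Fin k → ℕ // ∑ i, f i = s} = Nat.multichoose k s := by
  have e : {f : Fin k → ℕ // ∑ i, f i = s} ≃ Sym (Fin k) s := by
    refine Equiv.subtypeEquiv
      (Finsupp.equivFunOnFinite.symm.trans Multiset.toFinsupp.symm.toEquiv) ?_
    intro f
    show _ ↔ Multiset.card _ = s
    rw [show ((Finsupp.equivFunOnFinite.symm.trans Multiset.toFinsupp.symm.toEquiv) f) =
        Finsupp.toMultiset (Finsupp.equivFunOnFinite.symm f) from rfl,
      Finsupp.card_toMultiset, Finsupp.sum_fintype _ _ (fun _ => rfl)]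
    simp [Finsupp.equivFunOnFinite]
    exact Iff.rfl
  rw [Nat.card_congr e, Nat.card_eq_fintype_card, ← Fintype.card_fin k,
    Sym.card_sym_eq_multichoose]
  rw [Fintype.card_fin]

theorem card_nat_lists (k s : ℕ) :
    Nat.card {v : List ℕ // v.length = k ∧ v.sum = s} = Nat.multichoose k s := by
  have e : {v : List ℕ // v.length = k ∧ v.sum = s} ≃ {f : Fin k → ℕ // ∑ i, f i = s} := by
    refine ⟨fun x => ⟨fun i => x.1.get (Fin.cast x.2.1.symm i), ?_⟩,
      fun f => ⟨List.ofFn f.1, by simp, by rw [List.sum_ofFn]; exact f.2⟩, ?_, ?_⟩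
    · have hofn : List.ofFn (fun i => x.1.get (Fin.cast x.2.1.symm i)) = x.1 := by
        apply List.ext_get
        · simp [x.2.1]
        · intro i h1 h2
          simp
      rw [← List.sum_ofFn, hofn]
      exact x.2.2
    · rintro ⟨v, hl, hs⟩
      apply Subtype.ext
      apply List.ext_get
      · simp [hl]
      · intro i h1 h2
        simp
    · rintro ⟨f, hf⟩
      apply Subtype.ext
      funext i
      simp
  rw [Nat.card_congr e, card_sum_fn]

theorem map_sub_add {w : List ℕ} (h : ∀ x ∈ w, x ≠ 0) :
    (w.map (fun x => x - 1)).map (fun x => x + 1) = w := by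
  induction w with
  | nil => simp
  | cons x xs ih =>
    have hx := h x (by simp)
    simp only [List.map_cons]
    rw [ih (fun y hy => h y (by simp [hy]))]
    congr 1
    omega

theorem sum_map_sub {w : List ℕ} (h : ∀ x ∈ w, x ≠ 0) :
    (w.map (fun x => x - 1)).sum + w.length = w.sum := by
  induction w with
  | nil => simp
  | cons x xs ih =>
    have hx := h x (by simp)
    have := ih (fun y hy => h y (by simp [hy]))
    simp only [List.map_cons, List.sum_cons, List.length_cons]
    omega

theorem card_pos_lists (k s : ℕ) :
    Nat.card {w : List ℕ // w.length = k ∧ (∀ x ∈ w, x ≠ 0) ∧ w.sum = k + s} =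
      Nat.multichoose k s := by
  have e : {w : List ℕ // w.length = k ∧ (∀ x ∈ w, x ≠ 0) ∧ w.sum = k + s} ≃
      {v : List ℕ // v.length = k ∧ v.sum = s} := by
    refine ⟨fun x => ⟨x.1.map (fun y => y - 1), by simp [x.2.1], ?_⟩,
      fun v => ⟨v.1.map (fun y => y + 1), by simp [v.2.1], ?_, ?_⟩, ?_, ?_⟩
    · have := sum_map_sub x.2.2.1
      have h1 := x.2.1
      have h2 := x.2.2.2
      omega
    · intro y hy
      simp only [List.mem_map] at hy
      obtain ⟨z, -, rfl⟩ := hy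
      omega
    · have : (v.1.map (fun y => y + 1)).sum = v.1.sum + v.1.length := by
        induction v.1 with
        | nil => simp
        | cons a as ih => simp at ih ⊢; omega
      rw [this, v.2.1, v.2.2]
      omega
    · rintro ⟨w, hl, hpos, hs⟩
      apply Subtype.ext
      exact congrArg id (by simpa using map_sub_add hpos)
    · rintro ⟨v, hl, hs⟩
      apply Subtype.ext
      simp only
      rw [List.map_map]
      have : ((fun y => y - 1) ∘ fun y => y + 1) = id := by funext y; simp
      rw [this, List.map_id]
  rw [Nat.card_congr e, card_nat_lists]

def merge : List Bool → List ℕ → List ℕ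
  | [], _ => []
  | true :: bs, w => 0 :: merge bs w
  | false :: _, [] => []
  | false :: bs, x :: xs => x :: merge bs xs

theorem merge_decomp (l : List ℕ) :
    merge (l.map (fun x => x == 0)) (l.filter (fun x => x != 0)) = l := by
  induction l with
  | nil => rfl
  | cons x xs ih =>
    by_cases hx : x = 0
    · subst hx; simpa [merge] using ih
    · simp only [List.map_cons, List.filter_cons]
      rw [if_pos (by simpa using hx)]
      have : ((x == 0) : Bool) = false := by simpa using hx
      rw [this]
      simpa [merge] using ih

theorem merge_spec : ∀ (b : List Bool) (w : List ℕ), b.count false = w.length →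
    (∀ x ∈ w, x ≠ 0) →
    (merge b w).map (fun x => x == 0) = b ∧ (merge b w).filter (fun x => x != 0) = w := by
  intro b
  induction b with
  | nil =>
    intro w h _
    have : w = [] := List.eq_nil_of_length_eq_zero (by simpa using h.symm)
    subst this
    simp [merge]
  | cons x bs ih =>
    intro w h hw
    cases x with
    | true =>
      have h' : bs.count false = w.length := by simpa [List.count_cons] using h
      obtain ⟨h1, h2⟩ := ih w h' hw
      simp [merge, h1, h2]
    | false =>
      cases w with
      | nil => simp [List.count_cons] at h
      | cons y ys =>
        have h' : bs.count false = ys.length := by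
          simp [List.count_cons] at h ⊢; omega
        have hy : y ≠ 0 := hw y (by simp)
        obtain ⟨h1, h2⟩ := ih ys h' (fun z hz => hw z (by simp [hz]))
        refine ⟨?_, ?_⟩
        · simp only [merge, List.map_cons, h1]
          have : ((y == 0) : Bool) = false := by simpa using hy
          rw [this]
        · simp only [merge, List.filter_cons]
          rw [if_pos (by simpa using hy), h2]

theorem count_true_map_eq (l : List ℕ) :
    (l.map (fun x => x == 0)).count true = l.count 0 := by
  induction l with
  | nil => rfl
  | cons x xs ih =>
    by_cases hx : x = 0 <;>
      simp [List.count_cons, ih, hx]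

theorem count_bool (b : List Bool) : b.count true + b.count false = b.length := by
  induction b with
  | nil => rfl
  | cons x bs ih =>
    cases x <;> simp only [List.count_cons, List.length_cons] <;> simp <;> omega

theorem filter_length_count (l : List ℕ) :
    (l.filter (fun x => x != 0)).length + l.count 0 = l.length := by
  induction l with
  | nil => rfl
  | cons x xs ih =>
    by_cases hx : x = 0 <;>
      simp [List.filter_cons, List.count_cons, hx] <;> omega

theorem sum_filter_ne (l : List ℕ) : (l.filter (fun x => x != 0)).sum = l.sum := by
  induction l with
  | nil => rfl
  | cons x xs ih =>
    by_cases hx : x = 0 <;> simp [List.filter_cons, hx, ih]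

theorem card_lists (n p : ℕ) (hp : 1 ≤ p) (hpn : p ≤ n) :
    Nat.card {l : List ℕ // l.length = n + 1 ∧ l.sum = n ∧ l.count 0 = p} =
      (n + 1).choose p * (n - 1).choose (n - p) := by
  have e : {l : List ℕ // l.length = n + 1 ∧ l.sum = n ∧ l.count 0 = p} ≃
      {b : List Bool // b.length = n + 1 ∧ b.count true = p} ×
      {w : List ℕ // w.length = (n + 1 - p) ∧ (∀ x ∈ w, x ≠ 0) ∧
        w.sum = (n + 1 - p) + (p - 1)} := by
    refine ⟨fun x => (⟨x.1.map (fun y => y == 0), by simp [x.2.1],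
        by rw [count_true_map_eq]; exact x.2.2.2⟩,
      ⟨x.1.filter (fun y => y != 0), ?_, ?_, ?_⟩), fun q => ⟨merge q.1.1 q.2.1, ?_⟩, ?_, ?_⟩
    · have := filter_length_count x.1
      have h1 := x.2.1
      have h2 := x.2.2.2
      omega
    · intro y hy
      have := List.of_mem_filter hy
      simpa using this
    · rw [sum_filter_ne, x.2.2.1]
      omega
    · obtain ⟨hm, hf⟩ := merge_spec q.1.1 q.2.1
        (by have := count_bool q.1.1; have := q.1.2.1; have := q.1.2.2
            have := q.2.2.1; omega)
        q.2.2.2.1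
      have hlen : (merge q.1.1 q.2.1).length = n + 1 := by
        have := congrArg List.length hm
        simpa [q.1.2.1] using this
      have hcnt : (merge q.1.1 q.2.1).count 0 = p := by
        rw [← count_true_map_eq, hm]; exact q.1.2.2
      have hsum : (merge q.1.1 q.2.1).sum = n := by
        rw [← sum_filter_ne, hf, q.2.2.2.2]
        omega
      exact ⟨hlen, hsum, hcnt⟩
    · rintro ⟨l, hl⟩
      apply Subtype.ext
      exact merge_decomp l
    · rintro ⟨⟨b, hb⟩, ⟨w, hw⟩⟩
      obtain ⟨hm, hf⟩ := merge_spec b w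
        (by have := count_bool b; omega) hw.2.1
      simp only [Prod.mk.injEq, Subtype.mk.injEq]
      exact ⟨hm, hf⟩
  rw [Nat.card_congr e, Nat.card_prod, card_bool_lists, card_pos_lists,
    Nat.multichoose_eq]
  congr 1
  rw [show n + 1 - p + (p - 1) - 1 = n - 1 by omega]
  rw [← Nat.choose_symm (by omega : p - 1 ≤ n - 1), show n - 1 - (p - 1) = n - p by omega]


end NarayanaProof

theorem card_unlabeled_plane_trees_with_p_leaves (n p : ℕ) (hp : 1 ≤ p) (hpn : p ≤ n) :
    (Nat.card {t : PlaneTree // t.size = n + 1 ∧ t.leaves = p} : ℚ) =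
      (1 / (n + 1)) * Nat.choose (n + 1) p * Nat.choose (n - 1) (n - p) := by
  have h1 := NarayanaProof.card_trees_eq_card_lists n p
  have h2 := NarayanaProof.card_rotate n p
  have h3 := NarayanaProof.card_lists n p hp hpn
  have key : (n + 1) * Nat.card {t : PlaneTree // t.size = n + 1 ∧ t.leaves = p} =
      (n + 1).choose p * (n - 1).choose (n - p) := by
    rw [h1, ← h2, h3]
  have keyQ := congrArg (fun x : ℕ => (x : ℚ)) key
  push_cast at keyQ
  have hne : ((n : ℚ) + 1) ≠ 0 := by positivity
  field_simp
  linarith [keyQ]
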